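/- Let f ≥ 1 be an integer and define x : ℂ → ℂ by x(y) = −(y^f + y^{f+1}). Then for every y ∈ ℂ with 0 < |y| < 1 and y ∉ (−∞, 0] (i.e., y not a nonpositive real), the function θ is complex differentiable at y with θ′(y) = log(y)·x′(y)/x(y). -/

import Mathlib

open Complex

/-- The functions `Ψ̂_n(·;f)`, defined recursively by
`Ψ̂_0(y;f) = -1/(f+(f+1)y)^2` and
`Ψ̂_n(y;f) = -(d/dy)[Ψ̂_{n-1}(y;f) · y(y+1)/(f+(f+1)y)]`. -/
noncomputable def PsiHat (f : ℂ) : ℕ → ℂ → ℂ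
  | 0 => fun y => -1 / (f + (f + 1) * y) ^ 2
  | n + 1 => fun y =>
      -deriv (fun w => PsiHat f n w * (w * (w + 1) / (f + (f + 1) * w))) y

/-- The primitive `θ(y) = (f/2)(log y)^2 + (log y)·log(1+y) + Li₂(-y)`,
with `log` the principal branch and `Li₂(w) = ∑_{k≥1} w^k/k^2`. -/
noncomputable def theta (f : ℂ) (y : ℂ) : ℂ :=
  f / 2 * Complex.log y ^ 2 + Complex.log y * Complex.log (1 + y) +
    ∑' k : ℕ, (-y) ^ (k + 1) / ((k : ℂ) + 1) ^ 2

/-- Derivative of the dilogarithm-type series on the unit disc. -/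
lemma hasDerivAt_Li2_neg (y : ℂ) (h0 : 0 < ‖y‖) (h1 : ‖y‖ < 1) :
    HasDerivAt (fun z : ℂ => ∑' k : ℕ, (-z) ^ (k + 1) / ((k : ℂ) + 1) ^ 2)
      (-Complex.log (1 + y) / y) y := by
  have hy0 : y ≠ 0 := by
    intro h; rw [h] at h0; simp at h0
  set r : ℝ := (‖y‖ + 1) / 2 with hr
  have hyr : ‖y‖ < r := by rw [hr]; linarith
  have hr1 : r < 1 := by rw [hr]; linarith
  have hr0 : 0 ≤ r := le_of_lt (lt_of_le_of_lt (norm_nonneg y) hyr)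
  have key := hasDerivAt_tsum_of_isPreconnected
    (u := fun n => r ^ n)
    (g := fun (n : ℕ) (z : ℂ) => (-z) ^ (n + 1) / ((n : ℂ) + 1) ^ 2)
    (g' := fun (n : ℕ) (z : ℂ) => -(-z) ^ n / ((n : ℂ) + 1))
    (t := Metric.ball (0 : ℂ) r) (y₀ := y) (y := y)
    (summable_geometric_of_lt_one hr0 hr1)
    Metric.isOpen_ball (convex_ball (0:ℂ) r).isPreconnected
    (fun n z _ => by
      have hn : ((n : ℂ) + 1) ≠ 0 := Nat.cast_add_one_ne_zero n
      have h := ((hasDerivAt_id z).neg.pow (n + 1)).div_const (((n : ℂ) + 1) ^ 2)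
      convert h using 1
      · rfl
      · rfl
      simp only [Pi.neg_apply, id, Nat.add_sub_cancel]
      push_cast
      field_simp)
    (fun n z hz => by
      have hz' : ‖z‖ < r := by simpa using hz
      have : ‖-(-z) ^ n / ((n : ℂ) + 1)‖ ≤ ‖z‖ ^ n := by
        rw [norm_div, norm_neg, norm_pow, norm_neg]
        have h1n : (1 : ℝ) ≤ ‖((n : ℂ) + 1)‖ := by
          have : ((n : ℂ) + 1) = ((n + 1 : ℕ) : ℂ) := by push_cast; ring
          rw [this, Complex.norm_natCast]
          exact_mod_cast Nat.one_le_iff_ne_zero.mpr (Nat.succ_ne_zero n)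
        calc ‖z‖ ^ n / ‖((n : ℂ) + 1)‖ ≤ ‖z‖ ^ n / 1 := by
              apply div_le_div_of_nonneg_left (pow_nonneg (norm_nonneg z) n) one_pos h1n
          _ = ‖z‖ ^ n := by rw [div_one]
      refine this.trans ?_
      exact pow_le_pow_left₀ (norm_nonneg z) (le_of_lt hz') n)
    (by simpa using hyr)
    (by
      apply Summable.of_norm_bounded (summable_geometric_of_lt_one hr0 hr1)
      intro n
      rw [norm_div, norm_pow, norm_neg, norm_pow]
      have h1n : (1 : ℝ) ≤ ‖((n : ℂ) + 1)‖ ^ 2 := by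
        have : ((n : ℂ) + 1) = ((n + 1 : ℕ) : ℂ) := by push_cast; ring
        rw [this, Complex.norm_natCast]
        have : (1 : ℝ) ≤ ((n + 1 : ℕ) : ℝ) := by exact_mod_cast Nat.one_le_iff_ne_zero.mpr (Nat.succ_ne_zero n)
        nlinarith
      calc ‖y‖ ^ (n + 1) / ‖((n : ℂ) + 1)‖ ^ 2 ≤ ‖y‖ ^ (n + 1) / 1 :=
            div_le_div_of_nonneg_left (pow_nonneg (norm_nonneg y) _) one_pos h1n
        _ = ‖y‖ ^ (n + 1) := div_one _
        _ ≤ r ^ (n + 1) := pow_le_pow_left₀ (norm_nonneg y) (le_of_lt hyr) _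
        _ ≤ r ^ n := pow_le_pow_of_le_one hr0 (le_of_lt hr1) (Nat.le_succ n))
    (by simpa using hyr)
  have hsum : (∑' n : ℕ, -(-y) ^ n / ((n : ℂ) + 1)) = -Complex.log (1 + y) / y := by
    have hlog := hasSum_taylorSeries_log (z := y) (by simpa using h1)
    have hstep : HasSum (fun n : ℕ => (-1 : ℂ) ^ (n + 1 + 1) * y ^ (n + 1) / ((n + 1 : ℕ) : ℂ))
        (Complex.log (1 + y) - ∑ i ∈ Finset.range 1, (-1 : ℂ) ^ (i + 1) * y ^ i / (i : ℂ)) :=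
      (hasSum_nat_add_iff' (f := fun n : ℕ => (-1 : ℂ) ^ (n + 1) * y ^ n / (n : ℂ)) 1).mpr hlog
    have hlog' : HasSum (fun n : ℕ => (-1 : ℂ) ^ (n + 1 + 1) * y ^ (n + 1) / ((n : ℂ) + 1))
        (Complex.log (1 + y)) := by
      have hz : (∑ i ∈ Finset.range 1, (-1 : ℂ) ^ (i + 1) * y ^ i / (i : ℂ)) = 0 := by simp
      rw [hz, sub_zero] at hstep
      have he : (fun n : ℕ => (-1 : ℂ) ^ (n + 1 + 1) * y ^ (n + 1) / ((n : ℂ) + 1))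
          = fun n : ℕ => (-1 : ℂ) ^ (n + 1 + 1) * y ^ (n + 1) / ((n + 1 : ℕ) : ℂ) := by
        funext n; push_cast; ring
      rw [he]
      exact hstep
    have := hlog'.div_const (-y)
    have heq : ∀ n : ℕ, (-1 : ℂ) ^ (n + 1 + 1) * y ^ (n + 1) / (↑n + 1) / (-y)
        = -(-y) ^ n / ((n : ℂ) + 1) := by
      intro n
      have hn : ((n : ℂ) + 1) ≠ 0 := Nat.cast_add_one_ne_zero n
      rw [neg_pow]
      field_simp
      ring
    rw [show (-Complex.log (1 + y) / y) = Complex.log (1 + y) / (-y) by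
      rw [div_neg, neg_div]]
    refine HasSum.tsum_eq ?_
    convert this using 1
    · rfl
    funext n
    rw [← heq n]
  rw [← hsum]
  exact key

/-- `θ` is a primitive of `ω = log y · dx/x` on the framed mirror curve of
`ℂ³`: with `x(y) = -(y^f + y^(f+1))`, for `0 < |y| < 1` with `y` not a
nonpositive real, `θ` is complex differentiable at `y` with
`θ'(y) = log(y) · x'(y) / x(y)`. -/
theorem hasDerivAt_theta_eq_log_mul_dx_div_x
    (f : ℕ) (hf : 1 ≤ f) (y : ℂ)
    (h0 : 0 < ‖y‖) (h1 : ‖y‖ < 1)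
    (hy : y ∉ Complex.ofReal '' Set.Iic (0 : ℝ)) :
    HasDerivAt (theta (f : ℂ))
      (Complex.log y * deriv (fun w : ℂ => -(w ^ f + w ^ (f + 1))) y /
        (-(y ^ f + y ^ (f + 1)))) y := by
  obtain ⟨m, rfl⟩ : ∃ m : ℕ, f = m + 1 := ⟨f - 1, (Nat.succ_pred_eq_of_pos hf).symm⟩
  have hy0 : y ≠ 0 := by intro h; rw [h] at h0; simp at h0
  have hys : y ∈ Complex.slitPlane := by
    rw [Complex.mem_slitPlane_iff]
    by_contra h
    push_neg at h
    obtain ⟨h1', h2'⟩ := h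
    exact hy ⟨y.re, h1', by
      rw [Complex.ext_iff]; constructor
      · simp
      · simp [h2']⟩
  have hrey : |y.re| < 1 := lt_of_le_of_lt (Complex.abs_re_le_norm y) h1
  have h1ys : (1 : ℂ) + y ∈ Complex.slitPlane := by
    rw [Complex.mem_slitPlane_iff]
    left
    simp only [Complex.add_re, Complex.one_re]
    have := abs_lt.mp hrey
    linarith [this.1]
  have h1y0 : (1 : ℂ) + y ≠ 0 := Complex.slitPlane_ne_zero h1ys
  have hlog : HasDerivAt Complex.log y⁻¹ y := Complex.hasDerivAt_log hys
  have hlog1 : HasDerivAt (fun w : ℂ => Complex.log (1 + w)) (1 + y)⁻¹ y := by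
    have := (Complex.hasDerivAt_log h1ys).comp y ((hasDerivAt_id y).const_add 1)
    simpa [Function.comp_def] using this
  have hA : HasDerivAt (fun w : ℂ => ((m + 1 : ℕ) : ℂ) / 2 * Complex.log w ^ 2)
      (((m + 1 : ℕ) : ℂ) / 2 * (2 * Complex.log y ^ 1 * y⁻¹)) y :=
    (hlog.pow 2).const_mul _
  have hB : HasDerivAt (fun w : ℂ => Complex.log w * Complex.log (1 + w))
      (y⁻¹ * Complex.log (1 + y) + Complex.log y * (1 + y)⁻¹) y := hlog.mul hlog1
  have hC := hasDerivAt_Li2_neg y h0 h1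
  have htot := (hA.add hB).add hC
  have hx : HasDerivAt (fun w : ℂ => -(w ^ (m + 1) + w ^ (m + 1 + 1)))
      (-(((m + 1 : ℕ) : ℂ) * y ^ m + ((m + 1 + 1 : ℕ) : ℂ) * y ^ (m + 1))) y := by
    have := ((hasDerivAt_pow (m + 1) y).add (hasDerivAt_pow (m + 1 + 1) y)).neg
    simpa [Pi.add_def, Pi.neg_def] using this
  rw [hx.deriv]
  have hxne : y ^ (m + 1) + y ^ (m + 1 + 1) ≠ 0 := by
    have : y ^ (m + 1) + y ^ (m + 1 + 1) = y ^ (m + 1) * (1 + y) := by ring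
    rw [this]
    exact mul_ne_zero (pow_ne_zero _ hy0) h1y0
  have hval : ((m + 1 : ℕ) : ℂ) / 2 * (2 * Complex.log y ^ 1 * y⁻¹) +
      (y⁻¹ * Complex.log (1 + y) + Complex.log y * (1 + y)⁻¹) +
      -Complex.log (1 + y) / y =
      Complex.log y * -(((m + 1 : ℕ) : ℂ) * y ^ m + ((m + 1 + 1 : ℕ) : ℂ) * y ^ (m + 1)) /
        -(y ^ (m + 1) + y ^ (m + 1 + 1)) := by
    have hden : y ^ (m + 1) + y ^ (m + 1 + 1) = y * (1 + y) * y ^ m := by ring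
    have hnum : ((m + 1 : ℕ) : ℂ) * y ^ m + ((m + 1 + 1 : ℕ) : ℂ) * y ^ (m + 1)
        = (((m + 1 : ℕ) : ℂ) + ((m + 1 + 1 : ℕ) : ℂ) * y) * y ^ m := by ring
    rw [mul_neg, neg_div_neg_eq, hden, hnum, ← mul_assoc (Complex.log y),
      mul_div_mul_right _ _ (pow_ne_zero m hy0)]
    push_cast
    field_simp
    ring
  rw [← hval]
  exact htot
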